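/- Define a sequence c : ℕ → ℝ by c(1) = 1 and 1/c(K) = 1 + (3/8)·(1/c(K-1)) + (1 - (2/3)^{K-1})·(3/4) for K ≥ 2. Then c(K) is decreasing, bounded below by 5/14, and converges to 5/14 as K → ∞. -/

import Mathlib

open Filter

noncomputable def gAux (n : ℕ) : ℝ :=
  14/5 - 3/35 * (3/8 : ℝ)^n - 12/7 * (2/3 : ℝ)^n

lemma gAux_ge_one (n : ℕ) : (1 : ℝ) ≤ gAux n := by
  have h1 : (3/8 : ℝ)^n ≤ 1 := pow_le_one₀ (by norm_num) (by norm_num)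
  have h2 : (2/3 : ℝ)^n ≤ 1 := pow_le_one₀ (by norm_num) (by norm_num)
  have p1 : (0:ℝ) < (3/8:ℝ)^n := by positivity
  have p2 : (0:ℝ) < (2/3:ℝ)^n := by positivity
  unfold gAux; nlinarith

lemma gAux_mono (n : ℕ) : gAux n ≤ gAux (n+1) := by
  have p1 : (0:ℝ) < (3/8:ℝ)^n := by positivity
  have p2 : (0:ℝ) < (2/3:ℝ)^n := by positivity
  unfold gAux
  rw [pow_succ, pow_succ]
  nlinarith

lemma gAux_tendsto : Tendsto gAux atTop (nhds (14/5)) := by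
  have h1 : Tendsto (fun n : ℕ => (3/8 : ℝ)^n) atTop (nhds 0) :=
    tendsto_pow_atTop_nhds_zero_of_lt_one (by norm_num) (by norm_num)
  have h2 : Tendsto (fun n : ℕ => (2/3 : ℝ)^n) atTop (nhds 0) :=
    tendsto_pow_atTop_nhds_zero_of_lt_one (by norm_num) (by norm_num)
  have h3 : Tendsto (fun n : ℕ => (14/5 : ℝ) - 3/35 * (3/8:ℝ)^n - 12/7 * (2/3:ℝ)^n)
      atTop (nhds (14/5 - 3/35 * 0 - 12/7 * 0)) :=
    ((tendsto_const_nhds.sub (h1.const_mul (3/35))).sub (h2.const_mul (12/7)))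
  show Tendsto (fun n : ℕ => (14/5 : ℝ) - 3/35 * (3/8:ℝ)^n - 12/7 * (2/3:ℝ)^n) atTop (nhds (14/5))
  simpa [gAux] using h3

/-- The recursive capacity outer bound of Theorem 4 for `(K,4,2,2)` is decreasing
in `K`, bounded below by `5/14`, and converges to `5/14` as `K → ∞`. -/
theorem stmt12 (c : ℕ → ℝ) (h1 : c 1 = 1)
    (hrec : ∀ K : ℕ, 2 ≤ K →
      1 / c K = 1 + 3 / 8 * (1 / c (K - 1)) + (1 - (2 / 3 : ℝ) ^ (K - 1)) * (3 / 4)) :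
    (∀ K : ℕ, 1 ≤ K → c (K + 1) ≤ c K) ∧
    (∀ K : ℕ, 1 ≤ K → 5 / 14 ≤ c K) ∧
    Tendsto c atTop (nhds (5 / 14)) := by
  -- key: c (n+1) = 1 / gAux n
  have key : ∀ n : ℕ, c (n+1) = 1 / gAux n := by
    intro n
    induction n with
    | zero =>
      simp [h1, gAux]; norm_num
    | succ n ih =>
      have hg := gAux_ge_one n
      have hrec' := hrec (n+2) (by omega)
      have hsub : (n+2) - 1 = n + 1 := rfl
      rw [hsub, ih] at hrec'
      have hgpos : (0:ℝ) < gAux n := lt_of_lt_of_le one_pos hg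
      have hval : 1 / c (n+2) = gAux (n+1) := by
        rw [hrec']
        rw [one_div, gAux, gAux, pow_succ, pow_succ]
        field_simp
        ring
      have hgpos' : (0:ℝ) < gAux (n+1) := lt_of_lt_of_le one_pos (gAux_ge_one (n+1))
      have hc : c (n+2) ≠ 0 := by
        intro h0; rw [h0] at hval; simp at hval; linarith
      have := hval
      field_simp at this
      rw [eq_comm, mul_comm] at this
      rw [eq_div_iff (ne_of_gt hgpos')]
      linarith [this]
  have hpos : ∀ n : ℕ, (0:ℝ) < gAux n := fun n => lt_of_lt_of_le one_pos (gAux_ge_one n)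
  refine ⟨?_, ?_, ?_⟩
  · intro K hK
    obtain ⟨n, rfl⟩ := Nat.exists_eq_add_of_le hK
    rw [add_comm 1 n]
    rw [key n, key (n+1)]
    exact one_div_le_one_div_of_le (hpos n) (gAux_mono n)
  · intro K hK
    obtain ⟨n, rfl⟩ := Nat.exists_eq_add_of_le hK
    rw [add_comm, key n]
    have hle : gAux n ≤ 14/5 := by
      have p1 : (0:ℝ) < (3/8:ℝ)^n := by positivity
      have p2 : (0:ℝ) < (2/3:ℝ)^n := by positivity
      unfold gAux; nlinarith
    calc (5:ℝ)/14 = 1 / (14/5) := by norm_num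
    _ ≤ 1 / gAux n := one_div_le_one_div_of_le (hpos n) hle
  · have hlim : Tendsto (fun n : ℕ => 1 / gAux n) atTop (nhds (5/14)) := by
      have : Tendsto (fun n : ℕ => 1 / gAux n) atTop (nhds (1 / (14/5))) :=
        tendsto_const_nhds.div gAux_tendsto (by norm_num)
      norm_num at this ⊢
      exact this
    have hshift : Tendsto (fun K : ℕ => 1 / gAux (K - 1)) atTop (nhds (5/14)) :=
      hlim.comp (tendsto_sub_atTop_nat 1)
    have heq : (fun K : ℕ => 1 / gAux (K - 1)) =ᶠ[atTop] c := by
      filter_upwards [eventually_ge_atTop 1] with K hK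
      obtain ⟨n, rfl⟩ := Nat.exists_eq_add_of_le hK
      simp [add_comm 1 n, key n]
    exact Tendsto.congr' heq hshift
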